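/- Let ρ : G → GL(V) be a representation of a group G on a finite-dimensional vector space V over an algebraically closed field, and let H be a subgroup of G such that every element of ρ(H) is unipotent. Then the subspace of H-invariants V^H is nonzero whenever V is nonzero. -/

import Mathlib

open Module LinearMap

section Burnside

variable {F V : Type*} [Field F] [IsAlgClosed F] [AddCommGroup V] [Module F V]
  [FiniteDimensional F V] [Nontrivial V]

private lemma orbit_eq_top (A : Submodule F (Module.End F V))
    (h1 : (1 : Module.End F V) ∈ A)
    (hmul : ∀ x ∈ A, ∀ y ∈ A, x * y ∈ A)
    (hirr : ∀ W : Submodule F V, (∀ a ∈ A, ∀ v ∈ W, a v ∈ W) → W = ⊥ ∨ W = ⊤)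
    {u : V} (hu : u ≠ 0) :
    A.map (LinearMap.applyₗ (R := F) u) = ⊤ := by
  have hinvar : ∀ a ∈ A, ∀ x ∈ A.map (LinearMap.applyₗ (R := F) u), a x ∈ A.map (LinearMap.applyₗ (R := F) u) := by
    rintro a ha x ⟨b, hb, rfl⟩
    exact ⟨a * b, hmul a ha b hb, rfl⟩
  rcases hirr (A.map (LinearMap.applyₗ (R := F) u)) hinvar with h | h
  · exfalso
    apply hu
    have hmem : u ∈ A.map (LinearMap.applyₗ (R := F) u) :=
      ⟨1, h1, by simp⟩
    rw [h] at hmem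
    simpa using hmem
  · exact h

private theorem burnside (A : Submodule F (Module.End F V))
    (h1 : (1 : Module.End F V) ∈ A)
    (hmul : ∀ x ∈ A, ∀ y ∈ A, x * y ∈ A)
    (hirr : ∀ W : Submodule F V, (∀ a ∈ A, ∀ v ∈ W, a v ∈ W) → W = ⊥ ∨ W = ⊤) :
    A = ⊤ := by
  classical
  -- choose a nonzero element of minimal rank
  set S : Set ℕ := {n | ∃ a, a ∈ A ∧ a ≠ 0 ∧ finrank F (LinearMap.range a) = n} with hS
  have hSne : S.Nonempty := ⟨_, 1, h1, one_ne_zero, rfl⟩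
  obtain ⟨a, haA, ha0, hrank⟩ : ∃ a, a ∈ A ∧ a ≠ 0 ∧ finrank F (LinearMap.range a) = sInf S :=
    Nat.sInf_mem hSne
  have hmin : ∀ b ∈ A, b ≠ 0 → sInf S ≤ finrank F (LinearMap.range b) :=
    fun b hb hb0 => Nat.sInf_le ⟨b, hb, hb0, rfl⟩
  obtain ⟨v₁, hv₁⟩ : ∃ v, a v ≠ 0 := by
    by_contra h
    push_neg at h
    exact ha0 (LinearMap.ext fun x => h x)
  set w := a v₁ with hwdef
  have hw : w ≠ 0 := hv₁
  -- the minimal-rank element has rank one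
  have hle : LinearMap.range a ≤ F ∙ w := by
    by_contra hcon
    rw [SetLike.le_def] at hcon
    push_neg at hcon
    obtain ⟨x, hxr, hxs⟩ := hcon
    obtain ⟨v₂, rfl⟩ := hxr
    have horb := orbit_eq_top A h1 hmul hirr hw
    have hv₂mem : v₂ ∈ A.map (LinearMap.applyₗ (R := F) w) := by rw [horb]; trivial
    obtain ⟨b, hbA, hb⟩ := hv₂mem
    simp only [LinearMap.applyₗ_apply_apply] at hb
    -- b w = v₂
    set W₀ := LinearMap.range a with hW₀def
    have hW₀ : ∀ x ∈ W₀, (a * b) x ∈ W₀ := fun x _ => ⟨b x, rfl⟩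
    haveI : Nontrivial W₀ :=
      ⟨⟨⟨w, ⟨v₁, rfl⟩⟩, 0, by simp [Subtype.ext_iff, hw]⟩⟩
    set f := (a * b).restrict hW₀ with hfdef
    obtain ⟨μ, hμ⟩ := Module.End.exists_eigenvalue f
    obtain ⟨x₀, hx₀⟩ := hμ.exists_hasEigenvector
    set g : W₀ →ₗ[F] W₀ := f - μ • LinearMap.id with hgdef
    have hgx₀ : g x₀ = 0 := by
      simp [hgdef, LinearMap.sub_apply, hx₀.apply_eq_smul, sub_eq_zero]
    have hgker : finrank F (LinearMap.range g) < finrank F W₀ := by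
      have h5 := g.finrank_range_add_finrank_ker
      have hker : 0 < finrank F (LinearMap.ker g) := by
        have : Nontrivial (LinearMap.ker g) :=
          ⟨⟨⟨x₀, hgx₀⟩, 0, by simp [Subtype.ext_iff, hx₀.right]⟩⟩
        exact finrank_pos
      omega
    set c := a * b * a - μ • a with hcdef
    have hcA : c ∈ A :=
      A.sub_mem (hmul _ (hmul a haA b hbA) a haA) (A.smul_mem μ haA)
    have hcv₁ : c v₁ = a v₂ - μ • w := by
      simp [hcdef, LinearMap.sub_apply, Module.End.mul_apply, hb, hwdef]
      rw [← hwdef, hb]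
    have hc0 : c ≠ 0 := by
      intro h
      apply hxs
      have : a v₂ - μ • w = 0 := by rw [← hcv₁, h]; rfl
      have : a v₂ = μ • w := by linear_combination (norm := abel) this
      rw [this]
      exact Submodule.smul_mem _ _ (Submodule.mem_span_singleton_self w)
    have hrc : LinearMap.range c ≤ (LinearMap.range g).map W₀.subtype := by
      rintro _ ⟨x, rfl⟩
      refine ⟨g ⟨a x, ⟨x, rfl⟩⟩, ⟨_, rfl⟩, ?_⟩
      simp [hgdef, hfdef, hcdef, LinearMap.restrict_apply, LinearMap.sub_apply,
        Module.End.mul_apply]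
    have hlt : finrank F (LinearMap.range c) < sInf S := by
      calc finrank F (LinearMap.range c) ≤ finrank F ((LinearMap.range g).map W₀.subtype) :=
            Submodule.finrank_mono hrc
        _ = finrank F (LinearMap.range g) := Submodule.finrank_map_subtype_eq W₀ _
        _ < finrank F W₀ := hgker
        _ = sInf S := hrank
    exact absurd (hmin c hcA hc0) (not_le.mpr hlt)
  -- construct the functional φ with a x = φ x • w
  set e := LinearEquiv.toSpanNonzeroSingleton F V w hw with hedef
  set φ : V →ₗ[F] F :=
    e.symm.toLinearMap ∘ₗ (a.codRestrict (F ∙ w) fun x => hle ⟨x, rfl⟩) with hφdef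
  have hφ : ∀ x, a x = φ x • w := by
    intro x
    have h2 : e (φ x) = (a.codRestrict (F ∙ w) fun x => hle ⟨x, rfl⟩) x :=
      e.apply_symm_apply _
    have h3 : (↑(e (φ x)) : V) = a x := by rw [h2]; rfl
    rw [← h3]
    rfl
  have hφv₁ : φ v₁ ≠ 0 := by
    intro h
    apply hw
    rw [hwdef, hφ v₁, h, zero_smul]
  -- the space of functionals φ ∘ b, b ∈ A, is everything
  set L : Module.End F V →ₗ[F] (V →ₗ[F] F) := LinearMap.llcomp F V V F φ with hLdef
  set Φ := A.map L with hΦdef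
  have hΦtop : Φ = ⊤ := by
    have hco : Φ.dualCoannihilator = ⊥ := by
      have hinvar : ∀ a' ∈ A, ∀ x ∈ Φ.dualCoannihilator, a' x ∈ Φ.dualCoannihilator := by
        intro a' ha' x hx
        rw [Submodule.mem_dualCoannihilator] at hx ⊢
        rintro _ ⟨b, hbA, rfl⟩
        have := hx (L (b * a')) ⟨b * a', hmul b hbA a' ha', rfl⟩
        simpa [hLdef, Module.End.mul_apply] using this
      rcases hirr Φ.dualCoannihilator hinvar with h | h
      · exact h
      · exfalso
        have hmem : v₁ ∈ Φ.dualCoannihilator := by rw [h]; trivial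
        rw [Submodule.mem_dualCoannihilator] at hmem
        exact hφv₁ (by simpa [hLdef] using hmem (L 1) ⟨1, h1, rfl⟩)
    have hfr := Subspace.finrank_add_finrank_dualCoannihilator_eq Φ
    rw [hco, finrank_bot, add_zero] at hfr
    apply Submodule.eq_top_of_finrank_eq
    rw [Subspace.dual_finrank_eq, hfr]
  -- conclude that A contains every endomorphism
  rw [eq_top_iff]
  rintro f -
  let B := Module.finBasis F V
  have hf : f = ∑ i, (B.coord i).smulRight (f (B i)) := by
    ext x
    rw [LinearMap.sum_apply]
    conv_lhs => rw [← B.sum_repr x]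
    rw [map_sum]
    simp [LinearMap.smulRight_apply, Basis.coord_apply]
  rw [hf]
  refine A.sum_mem fun i _ => ?_
  obtain ⟨b, hbA, hb⟩ : ∃ b, b ∈ A ∧ L b = B.coord i := by
    have : B.coord i ∈ Φ := by rw [hΦtop]; trivial
    exact this
  obtain ⟨cc, hccA, hcc⟩ : ∃ cc, cc ∈ A ∧ cc w = f (B i) := by
    have : f (B i) ∈ A.map (LinearMap.applyₗ (R := F) w) := by
      rw [orbit_eq_top A h1 hmul hirr hw]; trivial
    obtain ⟨cc, h₁, h₂⟩ := this
    exact ⟨cc, h₁, by simpa using h₂⟩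
  have : (B.coord i).smulRight (f (B i)) = cc * a * b := by
    ext x
    rw [← hb]
    simp [Module.End.mul_apply, hφ (b x), map_smul, hcc, hLdef]
  rw [this]
  exact hmul _ (hmul cc hccA a haA) b hbA

end Burnside

private lemma kolchin {F : Type*} [Field F] [IsAlgClosed F] (n : ℕ) :
    ∀ (Γ : Type*) [Group Γ] (V : Type*) [AddCommGroup V] [Module F V]
      [FiniteDimensional F V] [Nontrivial V], finrank F V ≤ n →
      ∀ ρ : Representation F Γ V, (∀ g : Γ, IsNilpotent (ρ g - LinearMap.id)) →
      ∃ v : V, v ≠ 0 ∧ ∀ g : Γ, ρ g v = v := by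
  induction n with
  | zero =>
    intro Γ _ V _ _ _ _ hn ρ hu
    exact absurd hn (by have := Module.finrank_pos (R := F) (M := V); omega)
  | succ n ih =>
    intro Γ _ V _ _ _ _ hn ρ hu
    by_cases hex : ∃ W : Submodule F V, W ≠ ⊥ ∧ W ≠ ⊤ ∧ ∀ g : Γ, ∀ v ∈ W, ρ g v ∈ W
    · obtain ⟨W, hbot, htop, hinv⟩ := hex
      haveI : Nontrivial W := Submodule.nontrivial_iff_ne_bot.mpr hbot
      have hdim : finrank F W ≤ n := by
        have h2 : finrank F W < finrank F V := Submodule.finrank_lt htop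
        omega
      let ρW : Representation F Γ W :=
        { toFun := fun g => (ρ g).restrict (hinv g)
          map_one' := by
            ext x
            simp [LinearMap.restrict_apply]
          map_mul' := by
            intro g g'
            ext x
            simp [LinearMap.restrict_apply] }
      have hcoe : ∀ (g : Γ) (x : W), (ρW g x : V) = ρ g (x : V) := fun g x => rfl
      have hρWu : ∀ g : Γ, IsNilpotent (ρW g - LinearMap.id) := by
        intro g
        obtain ⟨d, hd⟩ := hu g
        set N : Module.End F W := ρW g - LinearMap.id with hNdef
        set N' : Module.End F V := ρ g - LinearMap.id with hN'def
        have hbase : ∀ x : W, ((N x : W) : V) = N' (x : V) := by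
          intro x
          simp [hNdef, hN'def, LinearMap.sub_apply, hcoe]
        have key : ∀ (k : ℕ) (x : W), (((N ^ k) x : W) : V) = (N' ^ k) (x : V) := by
          intro k
          induction k with
          | zero => intro x; simp
          | succ k ihk =>
            intro x
            rw [pow_succ, pow_succ, Module.End.mul_apply, Module.End.mul_apply,
              ihk (N x), hbase x]
        refine ⟨d, ?_⟩
        ext x
        rw [key d x, hd]
        simp
      obtain ⟨v, hv0, hvfix⟩ := ih Γ W hdim ρW hρWu
      refine ⟨(v : V), fun h => hv0 (Subtype.ext h), fun g => ?_⟩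
      have := congrArg (Subtype.val) (hvfix g)
      simpa [hcoe] using this
    · have hirr' : ∀ W : Submodule F V, (∀ g : Γ, ∀ v ∈ W, ρ g v ∈ W) → W = ⊥ ∨ W = ⊤ := by
        intro W hW
        by_contra h
        push_neg at h
        exact hex ⟨W, h.1, h.2, hW⟩
      set A := Submodule.span F (Set.range fun g : Γ => (ρ g : Module.End F V)) with hAdef
      have h1 : (1 : Module.End F V) ∈ A := Submodule.subset_span ⟨1, map_one ρ⟩
      have hmul : ∀ x ∈ A, ∀ y ∈ A, x * y ∈ A := by
        intro x hx y hy
        have hAA : A * A ≤ A := by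
          rw [hAdef, Submodule.span_mul_span]
          apply Submodule.span_le.mpr
          rintro _ ⟨_, ⟨g, rfl⟩, _, ⟨g', rfl⟩, rfl⟩
          exact Submodule.subset_span ⟨g * g', by simp⟩
        exact hAA (Submodule.mul_mem_mul hx hy)
      have hAinv : ∀ W : Submodule F V, (∀ a ∈ A, ∀ v ∈ W, a v ∈ W) → W = ⊥ ∨ W = ⊤ :=
        fun W hW => hirr' W fun g v hv => hW _ (Submodule.subset_span ⟨g, rfl⟩) v hv
      have hA := burnside A h1 hmul hAinv
      have htr : ∀ g : Γ, ρ g = 1 := by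
        intro g
        have htrunip : ∀ γ : Γ, LinearMap.trace F V (ρ γ) = (finrank F V : F) := by
          intro γ
          have h0 : LinearMap.trace F V (ρ γ - 1) = 0 :=
            (LinearMap.isNilpotent_trace_of_isNilpotent
              (by rw [Module.End.one_eq_id]; exact hu γ)).eq_zero
          have h1' := LinearMap.trace_one (R := F) (M := V)
          rw [map_sub, h1'] at h0
          linear_combination h0
        have hNtr : ∀ M : Module.End F V, LinearMap.trace F V ((ρ g - 1) * M) = 0 := by
          have hmemtr : ∀ M ∈ A, LinearMap.trace F V ((ρ g - 1) * M) = 0 := by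
            intro M hM
            induction hM using Submodule.span_induction with
            | mem x hx =>
              obtain ⟨g', rfl⟩ := hx
              show LinearMap.trace F V ((ρ g - 1) * ρ g') = 0
              rw [sub_mul, one_mul, ← map_mul ρ, map_sub, htrunip, htrunip, sub_self]
            | zero => simp
            | add x y _ _ hx hy => rw [mul_add, map_add, hx, hy, add_zero]
            | smul c x _ hx => rw [mul_smul_comm, map_smul, hx, smul_zero]
          intro M
          exact hmemtr M (by rw [hA]; trivial)
        by_contra hne
        have hN0 : ρ g - 1 ≠ 0 := sub_ne_zero.mpr hne
        obtain ⟨x, hx⟩ : ∃ x, (ρ g - 1) x ≠ 0 := by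
          by_contra h
          push_neg at h
          exact hN0 (LinearMap.ext h)
        obtain ⟨ψ, hψ⟩ : ∃ ψ : Module.Dual F V, ψ ((ρ g - 1) x) ≠ 0 := by
          by_contra h
          push_neg at h
          exact hx ((Module.forall_dual_apply_eq_zero_iff F _).mp h)
        apply hψ
        have hcomp : (ρ g - 1) * (ψ.smulRight x) = ψ.smulRight ((ρ g - 1) x) := by
          ext y
          simp [Module.End.mul_apply, LinearMap.smulRight_apply, map_smul]
        have hsmul : ψ.smulRight ((ρ g - 1) x) =
            dualTensorHom F V V (ψ ⊗ₜ[F] ((ρ g - 1) x)) := by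
          ext y
          simp [dualTensorHom_apply]
        have := hNtr (ψ.smulRight x)
        rw [hcomp, hsmul, LinearMap.trace_eq_contract_apply, contractLeft_apply] at this
        exact this
      obtain ⟨v, hv⟩ := exists_ne (0 : V)
      exact ⟨v, hv, fun g => by rw [htr g]; rfl⟩

theorem stmt_2 (F : Type*) [Field F] [IsAlgClosed F] (G : Type*) [Group G]
    (V : Type*) [AddCommGroup V] [Module F V] [FiniteDimensional F V] [Nontrivial V]
    (ρ : Representation F G V) (H : Subgroup G)
    (hunip : ∀ h ∈ H, IsNilpotent (ρ h - LinearMap.id)) :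
    ∃ v : V, v ≠ 0 ∧ ∀ h ∈ H, ρ h v = v := by
  obtain ⟨v, hv0, hfix⟩ := kolchin (F := F) (finrank F V) H V le_rfl
    (MonoidHom.comp ρ H.subtype) (fun g => hunip g g.2)
  exact ⟨v, hv0, fun h hh => hfix ⟨h, hh⟩⟩
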